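/- For GL_n, let ς be the map on W̃ = ℤ^n ⋊ W₀ defined by w₀φ^λ ↦ w_max w₀ w_max^{-1} φ^{−w_max λ}, where w_max is the longest element of W₀ = S_n. Then ς is a length-preserving group automorphism of W̃, and for every w ∈ W̃ one has LP(ς(w)) = w_max · LP(w) · w_max^{-1}. -/

import Mathlib

/-- The extended affine Weyl group of GL_n, encoded as pairs (u, lam) representing
u φ^lam, with multiplication (u φ^a)(v φ^b) = (uv) φ^{a∘v + b}. -/
abbrev Wtilde (n : ℕ) := Equiv.Perm (Fin n) × (Fin n → ℤ)

def wmul {n : ℕ} (w w' : Wtilde n) : Wtilde n := (w.1 * w'.1, w.2 ∘ ⇑w'.1 + w'.2)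

/-- ℓ(w₀ φ^λ) = Σ_{i<j, w₀(i)>w₀(j)} |λ(i)−λ(j)+1| + Σ_{i<j, w₀(i)<w₀(j)} |λ(i)−λ(j)|. -/
noncomputable def affLen {n : ℕ} (w : Wtilde n) : ℤ :=
  ∑ p ∈ Finset.univ.filter (fun p : Fin n × Fin n => p.1 < p.2),
    (if w.1 p.2 < w.1 p.1 then |w.2 p.1 - w.2 p.2 + 1| else |w.2 p.1 - w.2 p.2|)

/-- ς : w₀ φ^λ ↦ w_max w₀ w_max⁻¹ φ^{−w_max λ}, where w_max is the longest element
(the order-reversing permutation) and (w_max λ)(i) = λ(w_max⁻¹ i) = λ(rev i). -/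
def varsigma {n : ℕ} (w : Wtilde n) : Wtilde n :=
  (Fin.revPerm * w.1 * Fin.revPerm, fun i => - w.2 (Fin.rev i))

/-- The set of length positive elements associated to the decomposition x φ^μ y. -/
def LPset {n : ℕ} (x : Equiv.Perm (Fin n)) (μ : Fin n → ℤ) (y : Equiv.Perm (Fin n)) :
    Set (Equiv.Perm (Fin n)) :=
  {v | ∀ i j : Fin n, i < j →
    (0 : ℤ) ≤ μ (y (v i)) - μ (y (v j)) + (if v i < v j then 1 else 0) -
      (if x (y (v i)) < x (y (v j)) then 1 else 0)}

/-- (x, μ, y) is the decomposition w = x φ^μ y with μ dominant and φ^μ y of minimal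
length in W₀·(φ^μ y); note x φ^μ y = (x*y) φ^{μ∘y} and z·(φ^μ y) = (z*y) φ^{μ∘y}. -/
def IsMinDecomp {n : ℕ} (w : Wtilde n) (x : Equiv.Perm (Fin n)) (μ : Fin n → ℤ)
    (y : Equiv.Perm (Fin n)) : Prop :=
  (∀ i j : Fin n, i ≤ j → μ j ≤ μ i) ∧
  (∀ z : Equiv.Perm (Fin n), affLen (y, μ ∘ ⇑y) ≤ affLen (z * y, μ ∘ ⇑y)) ∧
  w = (x * y, μ ∘ ⇑y)

namespace Stmt12Aux

variable {n : ℕ}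

lemma conj_conj (u : Equiv.Perm (Fin n)) :
    Fin.revPerm * (Fin.revPerm * u * Fin.revPerm) * Fin.revPerm = u := by
  ext i; simp [Equiv.Perm.mul_apply]

lemma revPerm_inv : (Fin.revPerm : Equiv.Perm (Fin n))⁻¹ = Fin.revPerm := rfl

lemma conj_inv (u : Equiv.Perm (Fin n)) :
    (Fin.revPerm * u * Fin.revPerm)⁻¹ = Fin.revPerm * u⁻¹ * Fin.revPerm := by
  rw [mul_inv_rev, mul_inv_rev, revPerm_inv, mul_assoc]

lemma varsigma_involutive : Function.Involutive (varsigma (n := n)) := by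
  intro w
  unfold varsigma
  refine Prod.ext ?_ ?_
  · exact conj_conj w.1
  · funext i; simp

lemma varsigma_hom (w w' : Wtilde n) :
    varsigma (wmul w w') = wmul (varsigma w) (varsigma w') := by
  unfold varsigma wmul
  refine Prod.ext ?_ ?_
  · ext i; simp [Equiv.Perm.mul_apply]
  · funext i
    simp [Equiv.Perm.mul_apply]
    ring

lemma affLen_varsigma (w : Wtilde n) : affLen (varsigma w) = affLen w := by
  unfold affLen varsigma
  refine Finset.sum_nbij' (fun p : Fin n × Fin n => (Fin.rev p.2, Fin.rev p.1))
    (fun p : Fin n × Fin n => (Fin.rev p.2, Fin.rev p.1)) ?_ ?_ ?_ ?_ ?_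
  · intro p hp
    simp only [Finset.mem_filter, Finset.mem_univ, true_and] at hp ⊢
    simpa [Fin.rev_lt_rev] using hp
  · intro p hp
    simp only [Finset.mem_filter, Finset.mem_univ, true_and] at hp ⊢
    simpa [Fin.rev_lt_rev] using hp
  · intro p _; simp
  · intro p _; simp
  · intro p hp
    simp only [Finset.mem_filter, Finset.mem_univ, true_and] at hp
    simp only [Equiv.Perm.mul_apply, Fin.revPerm_apply, Fin.rev_rev, Fin.rev_lt_rev]
    have h1 : -w.2 (Fin.rev p.1) - -w.2 (Fin.rev p.2) + 1
        = w.2 (Fin.rev p.2) - w.2 (Fin.rev p.1) + 1 := by ring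
    have h2 : -w.2 (Fin.rev p.1) - -w.2 (Fin.rev p.2)
        = w.2 (Fin.rev p.2) - w.2 (Fin.rev p.1) := by ring
    rw [h1, h2]

def prec (lam : Fin n → ℤ) (i j : Fin n) : Prop :=
  lam j < lam i ∨ (lam i = lam j ∧ i < j)

lemma prec_trans {lam : Fin n → ℤ} {i j k : Fin n} (h1 : prec lam i j) (h2 : prec lam j k) :
    prec lam i k := by
  rcases h1 with h1 | ⟨e1, l1⟩ <;> rcases h2 with h2 | ⟨e2, l2⟩
  · exact Or.inl (h2.trans h1)
  · exact Or.inl (e2 ▸ h1)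
  · exact Or.inl (e1 ▸ h2)
  · exact Or.inr ⟨e1.trans e2, l1.trans l2⟩

lemma prec_asymm {lam : Fin n → ℤ} {i j : Fin n} (h1 : prec lam i j) (h2 : prec lam j i) :
    False := by
  rcases h1 with h1 | ⟨e1, l1⟩ <;> rcases h2 with h2 | ⟨e2, l2⟩
  · exact absurd h1 (lt_asymm h2)
  · exact absurd h1 (e2 ▸ lt_irrefl _)
  · exact absurd h2 (e1 ▸ lt_irrefl _)
  · exact absurd l1 (lt_asymm l2)

lemma swap_adj_lt {a b c d : Fin n} (hb : (b : ℕ) = (a : ℕ) + 1)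
    (h1 : ¬(c = a ∧ d = b)) (h2 : ¬(c = b ∧ d = a)) :
    (Equiv.swap a b c < Equiv.swap a b d ↔ c < d) := by
  have hv : ∀ e : Fin n, ((Equiv.swap a b e : Fin n) : ℕ)
      = if (e : ℕ) = (a : ℕ) then (b : ℕ) else if (e : ℕ) = (b : ℕ) then (a : ℕ) else (e : ℕ) := by
    intro e
    rcases eq_or_ne e a with rfl | he1
    · simp [Equiv.swap_apply_left]
    · rcases eq_or_ne e b with rfl | he2
      · have : (e : ℕ) ≠ (a : ℕ) := fun h => he1 (Fin.ext h)
        simp [Equiv.swap_apply_right, this]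
      · have g1 : (e : ℕ) ≠ (a : ℕ) := fun h => he1 (Fin.ext h)
        have g2 : (e : ℕ) ≠ (b : ℕ) := fun h => he2 (Fin.ext h)
        simp [Equiv.swap_apply_of_ne_of_ne he1 he2, g1, g2]
  have h1' : ¬((c : ℕ) = (a : ℕ) ∧ (d : ℕ) = (b : ℕ)) := by
    rintro ⟨u1, u2⟩; exact h1 ⟨Fin.ext u1, Fin.ext u2⟩
  have h2' : ¬((c : ℕ) = (b : ℕ) ∧ (d : ℕ) = (a : ℕ)) := by
    rintro ⟨u1, u2⟩; exact h2 ⟨Fin.ext u1, Fin.ext u2⟩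
  rw [Fin.lt_def, Fin.lt_def, hv, hv]
  split_ifs <;> omega

lemma prec_of_adjacent {lam : Fin n → ℤ} {y : Equiv.Perm (Fin n)}
    (hmin : ∀ u : Equiv.Perm (Fin n), affLen (y, lam) ≤ affLen (u, lam))
    {k l : Fin n} (hval : ((y l : Fin n) : ℕ) = ((y k : Fin n) : ℕ) + 1) : prec lam k l := by
  by_contra hnp
  set u : Equiv.Perm (Fin n) := Equiv.swap (y k) (y l) * y with hu
  have huk : u k = y l := by
    rw [hu, Equiv.Perm.mul_apply, Equiv.swap_apply_left]
  have hul : u l = y k := by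
    rw [hu, Equiv.Perm.mul_apply, Equiv.swap_apply_right]
  have hyk_lt : y k < y l := by rw [Fin.lt_def]; omega
  have hindicator : ∀ p : Fin n × Fin n, ¬(p.1 = k ∧ p.2 = l) → ¬(p.1 = l ∧ p.2 = k) →
      ((u p.2 < u p.1) ↔ (y p.2 < y p.1)) := by
    intro p h1 h2
    have := swap_adj_lt (a := y k) (b := y l) (c := y p.2) (d := y p.1) hval
      (fun ⟨e1, e2⟩ => h2 ⟨y.injective e2, y.injective e1⟩)
      (fun ⟨e1, e2⟩ => h1 ⟨y.injective e2, y.injective e1⟩)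
    simpa [hu, Equiv.Perm.mul_apply] using this
  have hstrict : ∀ p : Fin n × Fin n, p.1 < p.2 →
      ((p.1 = k ∧ p.2 = l) ∨ (p.1 = l ∧ p.2 = k)) →
      (if u p.2 < u p.1 then |lam p.1 - lam p.2 + 1| else |lam p.1 - lam p.2|) <
      (if y p.2 < y p.1 then |lam p.1 - lam p.2 + 1| else |lam p.1 - lam p.2|) := by
    rintro p hp (⟨h1, h2⟩ | ⟨h1, h2⟩)
    · -- p = (k, l), k < l
      rw [h1, h2] at hp ⊢
      rw [if_pos (by rw [huk, hul]; exact hyk_lt),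
        if_neg (by exact fun h => absurd hyk_lt (lt_asymm h))]
      have hkl : lam k < lam l := by
        rcases lt_trichotomy (lam k) (lam l) with h | h | h
        · exact h
        · exact absurd (Or.inr ⟨h, hp⟩) hnp
        · exact absurd (Or.inl h) hnp
      rw [abs_of_nonpos (by omega), abs_of_neg (by omega)]
      omega
    · -- p = (l, k), l < k
      rw [h1, h2] at hp ⊢
      rw [if_neg (by rw [huk, hul]; exact fun h => absurd hyk_lt (lt_asymm h)), if_pos hyk_lt]
      have hkl : lam k ≤ lam l := by
        by_contra h
        exact hnp (Or.inl (lt_of_not_ge h))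
      rw [abs_of_nonneg (by omega), abs_of_nonneg (by omega)]
      omega
  have hlt : affLen (u, lam) < affLen (y, lam) := by
    unfold affLen
    apply Finset.sum_lt_sum
    · intro p hp
      simp only [Finset.mem_filter, Finset.mem_univ, true_and] at hp
      by_cases hc : (p.1 = k ∧ p.2 = l) ∨ (p.1 = l ∧ p.2 = k)
      · exact le_of_lt (hstrict p hp hc)
      · have hind := hindicator p (fun h => hc (Or.inl h)) (fun h => hc (Or.inr h))
        dsimp only
        simp only [hind]
        exact le_refl _
    · have hkl : k ≠ l := by
        intro h; rw [h] at hval; omega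
      rcases hkl.lt_or_gt with h | h
      · exact ⟨(k, l), by simp [h], hstrict (k, l) h (Or.inl ⟨rfl, rfl⟩)⟩
      · exact ⟨(l, k), by simp [h], hstrict (l, k) h (Or.inr ⟨rfl, rfl⟩)⟩
  exact absurd (hmin u) (not_le.mpr hlt)

lemma prec_chain {lam : Fin n → ℤ} {y : Equiv.Perm (Fin n)}
    (hmin : ∀ u : Equiv.Perm (Fin n), affLen (y, lam) ≤ affLen (u, lam)) :
    ∀ (m : ℕ) (a b : Fin n), (b : ℕ) = (a : ℕ) + m + 1 → prec lam (y⁻¹ a) (y⁻¹ b) := by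
  intro m
  induction m with
  | zero =>
    intro a b hab
    exact prec_of_adjacent hmin (by simp [hab])
  | succ m ih =>
    intro a b hab
    have hc : (a : ℕ) + 1 < n := by have := b.isLt; omega
    exact prec_trans
      (prec_of_adjacent hmin (k := y⁻¹ a) (l := y⁻¹ ⟨(a : ℕ) + 1, hc⟩) (by simp))
      (ih ⟨(a : ℕ) + 1, hc⟩ b (by simp; omega))

lemma prec_of_lt {lam : Fin n → ℤ} {y : Equiv.Perm (Fin n)}
    (hmin : ∀ u : Equiv.Perm (Fin n), affLen (y, lam) ≤ affLen (u, lam))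
    {i j : Fin n} (h : y i < y j) : prec lam i j := by
  have hv : ((y j : Fin n) : ℕ)
      = ((y i : Fin n) : ℕ) + (((y j : Fin n) : ℕ) - ((y i : Fin n) : ℕ) - 1) + 1 := by
    rw [Fin.lt_def] at h; omega
  have := prec_chain hmin _ (y i) (y j) hv
  simpa using this

lemma min_lt_iff_prec {lam : Fin n → ℤ} {y : Equiv.Perm (Fin n)}
    (hmin : ∀ u : Equiv.Perm (Fin n), affLen (y, lam) ≤ affLen (u, lam))
    {i j : Fin n} (hij : i ≠ j) : y i < y j ↔ prec lam i j := by
  constructor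
  · exact prec_of_lt hmin
  · intro h
    rcases (y.injective.ne hij).lt_or_gt with h' | h'
    · exact h'
    · exact absurd (prec_of_lt hmin h') (fun h2 => prec_asymm h h2)

lemma min_unique {lam : Fin n → ℤ} {y y' : Equiv.Perm (Fin n)}
    (h : ∀ u : Equiv.Perm (Fin n), affLen (y, lam) ≤ affLen (u, lam))
    (h' : ∀ u : Equiv.Perm (Fin n), affLen (y', lam) ≤ affLen (u, lam)) : y = y' := by
  have mono : StrictMono ⇑(y' * y⁻¹) := by
    intro c d hcd
    have hne : y⁻¹ c ≠ y⁻¹ d := fun e => hcd.ne (by simpa using congrArg y e)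
    have h1 : prec lam (y⁻¹ c) (y⁻¹ d) := by
      rw [← min_lt_iff_prec h hne]
      simpa using hcd
    have := (min_lt_iff_prec h' hne).mpr h1
    simpa [Equiv.Perm.mul_apply] using this
  have hone : y' * y⁻¹ = 1 := by
    apply Equiv.ext
    intro i
    have := congrArg (fun f : Fin n ≃o Fin n => f i)
      (Subsingleton.elim
        (StrictMono.orderIsoOfSurjective ⇑(y' * y⁻¹) mono (y' * y⁻¹).surjective)
        (OrderIso.refl (Fin n)))
    simpa [StrictMono.coe_orderIsoOfSurjective] using this
  have := mul_eq_one_iff_eq_inv.mp hone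
  rw [this]
  simp

lemma LP_conj (x y : Equiv.Perm (Fin n)) (μ : Fin n → ℤ) (v : Equiv.Perm (Fin n)) :
    v ∈ LPset (Fin.revPerm * x * Fin.revPerm) (fun i => -μ (Fin.rev i))
        (Fin.revPerm * y * Fin.revPerm)
      ↔ (Fin.revPerm * v * Fin.revPerm) ∈ LPset x μ y := by
  simp only [LPset, Set.mem_setOf_eq, Equiv.Perm.mul_apply, Fin.revPerm_apply, Fin.rev_rev,
    Fin.rev_lt_rev]
  constructor
  · intro h i j hij
    have := h (Fin.rev j) (Fin.rev i) (by rwa [Fin.rev_lt_rev])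
    linarith
  · intro h i j hij
    have := h (Fin.rev j) (Fin.rev i) (by rwa [Fin.rev_lt_rev])
    simp only [Fin.rev_rev, Fin.rev_lt_rev] at this ⊢
    linarith

end Stmt12Aux

/-- ς is a length-preserving group automorphism of W̃, and
LP(ς(w)) = w_max · LP(w) · w_max⁻¹ for every w. -/
theorem stmt_12 (n : ℕ) (hn : 0 < n) :
    (∀ w w' : Wtilde n, varsigma (wmul w w') = wmul (varsigma w) (varsigma w')) ∧
    Function.Bijective (varsigma (n := n)) ∧
    (∀ w : Wtilde n, affLen (varsigma w) = affLen w) ∧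
    (∀ (w : Wtilde n) (x x' : Equiv.Perm (Fin n)) (μ μ' : Fin n → ℤ)
        (y y' : Equiv.Perm (Fin n)),
      IsMinDecomp w x μ y → IsMinDecomp (varsigma w) x' μ' y' →
      LPset x' μ' y' =
        {v | ∃ u ∈ LPset x μ y, v = Fin.revPerm * u * Fin.revPerm}) := by
  refine ⟨Stmt12Aux.varsigma_hom, Stmt12Aux.varsigma_involutive.bijective,
    Stmt12Aux.affLen_varsigma, ?_⟩
  intro w x x' μ μ' y y' hd hd'
  obtain ⟨-, hmin, hw⟩ := hd
  obtain ⟨-, hmin', hw'⟩ := hd'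
  subst hw
  have h1 : Fin.revPerm * (x * y) * Fin.revPerm = x' * y' := congrArg Prod.fst hw'
  have h2 : (fun i => -((μ ∘ ⇑y) (Fin.rev i))) = μ' ∘ ⇑y' := congrArg Prod.snd hw'
  have hminy : ∀ u : Equiv.Perm (Fin n), affLen (y, μ ∘ ⇑y) ≤ affLen (u, μ ∘ ⇑y) := by
    intro u; simpa using hmin (u * y⁻¹)
  have hminy' : ∀ u : Equiv.Perm (Fin n),
      affLen (y', fun i => -((μ ∘ ⇑y) (Fin.rev i)))
        ≤ affLen (u, fun i => -((μ ∘ ⇑y) (Fin.rev i))) := by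
    intro u
    rw [h2]
    simpa using hmin' (u * y'⁻¹)
  have haffconj : ∀ u : Equiv.Perm (Fin n),
      affLen (u, fun i => -((μ ∘ ⇑y) (Fin.rev i)))
        = affLen (Fin.revPerm * u * Fin.revPerm, μ ∘ ⇑y) := by
    intro u
    have h3 := Stmt12Aux.affLen_varsigma (Fin.revPerm * u * Fin.revPerm, μ ∘ ⇑y)
    have h4 : varsigma ((Fin.revPerm * u * Fin.revPerm : Equiv.Perm (Fin n)), μ ∘ ⇑y)
        = (u, fun i => -((μ ∘ ⇑y) (Fin.rev i))) := by
      unfold varsigma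
      exact Prod.ext (Stmt12Aux.conj_conj u) rfl
    rw [h4] at h3
    exact h3
  have hminyy : ∀ u : Equiv.Perm (Fin n),
      affLen ((Fin.revPerm * y * Fin.revPerm : Equiv.Perm (Fin n)),
          fun i => -((μ ∘ ⇑y) (Fin.rev i)))
        ≤ affLen (u, fun i => -((μ ∘ ⇑y) (Fin.rev i))) := by
    intro u
    rw [haffconj, haffconj, Stmt12Aux.conj_conj y]
    exact hminy _
  have hyeq : y' = Fin.revPerm * y * Fin.revPerm := Stmt12Aux.min_unique hminy' hminyy
  have hyinv : y'⁻¹ = Fin.revPerm * y⁻¹ * Fin.revPerm := by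
    rw [hyeq, Stmt12Aux.conj_inv]
  have hμeq : μ' = fun i => -μ (Fin.rev i) := by
    funext i
    have h3 := congrFun h2 (y'⁻¹ i)
    simp only [Function.comp_apply, show ∀ a, y' (y'⁻¹ a) = a from y'.apply_symm_apply] at h3
    rw [← h3, hyinv]
    simp [Equiv.Perm.mul_apply]
  have hxeq : x' = Fin.revPerm * x * Fin.revPerm := by
    have hsplit : Fin.revPerm * (x * y) * Fin.revPerm
        = (Fin.revPerm * x * Fin.revPerm) * (Fin.revPerm * y * Fin.revPerm) := by
      ext i; simp [Equiv.Perm.mul_apply]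
    rw [hsplit, ← hyeq] at h1
    exact (mul_right_cancel h1).symm
  rw [hxeq, hμeq, hyeq]
  ext v
  rw [show (v ∈ LPset (Fin.revPerm * x * Fin.revPerm) (fun i => -μ (Fin.rev i))
      (Fin.revPerm * y * Fin.revPerm))
    ↔ (Fin.revPerm * v * Fin.revPerm ∈ LPset x μ y) from Stmt12Aux.LP_conj x y μ v]
  simp only [Set.mem_setOf_eq]
  constructor
  · intro h
    exact ⟨Fin.revPerm * v * Fin.revPerm, h, (Stmt12Aux.conj_conj v).symm⟩
  · rintro ⟨u, hu, rfl⟩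
    rwa [Stmt12Aux.conj_conj u]
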